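/- arXiv:2102.07573 — 2 statements merged into one kernel-verified Lean document; each statement's English description precedes it below -/
import Mathlib

section
/- Let E be an elliptic curve defined over a number field K by a Weierstrass equation, with division polynomials ψ_n and the polynomials φ_n = xψ_n² − ψ_{n+1}ψ_{n−1}, regarded as polynomials in x alone. Then for all positive integers n, m one has the polynomial identity (φ_m(x)·ψ_n²(x) − φ_n(x)·ψ_m²(x))² = ψ_{n+m}²(x)·ψ_{|n−m|}²(x). -/
open WeierstrassCurve Polynomial
open scoped Polynomial.Bivariate

set_option linter.unusedSectionVars false

section EDSAux
variable {F : Type*} [Field F] (w : ℤ → F)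

theorem eds_main
    (h0 : w 0 = 0) (h1 : w 1 = 1)
    (hneg : ∀ n : ℤ, w (-n) = - w n)
    (hnz : ∀ n : ℤ, n ≠ 0 → w n ≠ 0)
    (hO : ∀ k : ℤ, w (2*k+1) = w (k+2) * w k ^ 3 - w (k-1) * w (k+1) ^ 3)
    (hE : ∀ k : ℤ, w (2*k) * w 2 = w (k-1)^2 * w k * w (k+2) - w (k-2) * w k * w (k+1)^2) :
    ∀ x y : ℤ, 0 ≤ y → y ≤ x →
      w (x+y) * w (x-y) = w (x+1) * w (x-1) * w y ^ 2 - w (y+1) * w (y-1) * w x ^ 2 := by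
  suffices key : ∀ s : ℕ, ∀ x y : ℤ, 0 ≤ y → y ≤ x → x + y ≤ (s:ℤ) →
      w (x+y) * w (x-y) = w (x+1) * w (x-1) * w y ^ 2 - w (y+1) * w (y-1) * w x ^ 2 by
    intro x y hy hxy
    exact key (x+y).toNat x y hy hxy (by omega)
  intro s
  induction s with
  | zero =>
    intro x y hy hxy hs
    have hx0 : x = 0 := by omega
    have hy0 : y = 0 := by omega
    subst hx0; subst hy0
    norm_num [h0]
  | succ s ih =>
    intro x y hy hyx hs
    by_cases hss : x + y ≤ (s:ℤ)
    · exact ih x y hy hyx hss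
    have hsum : x + y = (s:ℤ) + 1 := by omega
    by_cases hy0 : y = 0
    · subst hy0
      rw [show x + 0 = x by ring, show x - 0 = x by ring, show (0:ℤ)+1 = 1 by ring,
        show (0:ℤ)-1 = -1 by ring, h0, hneg 1, h1]
      ring
    by_cases hy1 : y = 1
    · subst hy1
      rw [show (1:ℤ)+1 = 2 by ring, show (1:ℤ)-1 = 0 by ring, h0, h1]
      ring
    by_cases hxy0 : x = y
    · subst hxy0
      rw [show x - x = 0 by ring, h0]
      ring
    by_cases hd1 : x = y + 1
    · subst hd1
      rw [show y+1+y = 2*y+1 by ring, show y+1-y = 1 by ring, show y+1+1 = y+2 by ring,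
        show y+1-1 = y by ring]
      linear_combination w (2*y+1) * h1 + hO y
    by_cases hd2 : x = y + 2
    · subst hd2
      have hEy := hE (y+1)
      rw [show y+1-1 = y by ring, show y+1+2 = y+3 by ring, show y+1-2 = y-1 by ring,
        show y+1+1 = y+2 by ring] at hEy
      rw [show y+2+y = 2*(y+1) by ring, show y+2-y = 2 by ring, show y+2+1 = y+3 by ring,
        show y+2-1 = y+1 by ring]
      linear_combination hEy
    -- main case
    have hy2 : 2 ≤ y := by omega
    have hd3 : y + 3 ≤ x := by omega
    rcases Int.even_or_odd (x + y) with he | ho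
    · -- even case
      obtain ⟨t, ht⟩ := he
      obtain ⟨e, hde⟩ : ∃ e : ℤ, x - y = e + e := ⟨(x-y)/2, by omega⟩
      have hx : x = t + e := by omega
      have hyv : y = t - e := by omega
      subst hx
      subst hyv
      rw [show t+e+(t-e) = 2*t by ring, show t+e-(t-e) = 2*e by ring]
      have hEt := hE t
      have hEe := hE e
      by_cases hy2' : t - e = 2
      · -- special Somos case, y = 2 : x = 2e+2
        have hte : t = e + 2 := by omega
        subst hte
        rw [show 2*(e+2) = 2*e+4 by ring, show e+2+e+1 = 2*e+3 by ring,
          show e+2+e-1 = 2*e+1 by ring, show e+2-e+1 = 3 by ring,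
          show e+2-e-1 = 1 by ring, show e+2-e = 2 by ring, show e+2+e = 2*e+2 by ring]
        -- goal : w (2e+4) * w (2e) = w (2e+3) * w (2e+1) * w 2 ^2 - w 3 * w 1 * w (2e+2)^2
        have hEup := hE (e+2)
        rw [show 2*(e+2) = 2*e+4 by ring, show e+2-1 = e+1 by ring, show e+2+2 = e+4 by ring,
          show e+2-2 = e by ring, show e+2+1 = e+3 by ring] at hEup
        have hOum := hO e
        have hEum := hE e
        have hOumm := hO (e-1)
        rw [show 2*(e-1)+1 = 2*e-1 by ring, show e-1+2 = e+1 by ring, show e-1-1 = e-2 by ring,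
          show e-1+1 = e by ring] at hOumm
        have IHa := ih (e+3) e (by omega) (by omega) (by omega)
        rw [show e+3+e = 2*e+3 by ring, show e+3-e = 3 by ring, show e+3+1 = e+4 by ring,
          show e+3-1 = e+2 by ring] at IHa
        have IHb := ih (e+3) (e-1) (by omega) (by omega) (by omega)
        rw [show e+3+(e-1) = 2*e+2 by ring, show e+3-(e-1) = 4 by ring, show e+3+1 = e+4 by ring,
          show e+3-1 = e+2 by ring, show e-1+1 = e by ring, show e-1-1 = e-2 by ring] at IHb
        have IH5 := ih (2*e+1) 2 (by omega) (by omega) (by omega)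
        rw [show 2*e+1+2 = 2*e+3 by ring, show 2*e+1-2 = 2*e-1 by ring,
          show 2*e+1+1 = 2*e+2 by ring, show 2*e+1-1 = 2*e by ring,
          show (2:ℤ)+1 = 3 by ring, show (2:ℤ)-1 = 1 by ring] at IH5
        have IH6 := ih (2*e) 2 (by omega) (by omega) (by omega)
        rw [show (2:ℤ)+1 = 3 by ring, show (2:ℤ)-1 = 1 by ring] at IH6
        have IH7 := ih (2*e) 3 (by omega) (by omega) (by omega)
        rw [show (3:ℤ)+1 = 4 by ring, show (3:ℤ)-1 = 2 by ring] at IH7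
        have IH8 := ih (2*e-1) 2 (by omega) (by omega) (by omega)
        rw [show 2*e-1+2 = 2*e+1 by ring, show 2*e-1-2 = 2*e-3 by ring,
          show 2*e-1+1 = 2*e by ring, show 2*e-1-1 = 2*e-2 by ring,
          show (2:ℤ)+1 = 3 by ring, show (2:ℤ)-1 = 1 by ring] at IH8
        -- step 1 : the Plücker relation P4
        have hP4 : w (2*e+4) * w 2 * w (2*e-1) =
            w 2 * w 3 * w (2*e+3) * w (2*e) - w 4 * w (2*e+2) * w (2*e+1) := by
          linear_combination w (2*e-1) * hEup
            + (w (e+1)^2 * w (e+2) * w (e+4) - w e * w (e+2) * w (e+3)^2) * hOumm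
            - (w (2*e) * w 2) * IHa
            - (w (e+4) * w (e+2) * w e^2 - w (e+1) * w (e-1) * w (e+3)^2) * hEum
            + w (2*e+1) * IHb
            + (w (e+4) * w (e+2) * w (e-1)^2 - w e * w (e-2) * w (e+3)^2) * hOum
        -- step 2 : cancellation
        have hnz1 : w 2 * w 2 * w (2*e-1) * w (2*e) ≠ 0 := by
          have n2 := hnz 2 (by norm_num)
          have nm := hnz (2*e-1) (by omega)
          have nt := hnz (2*e) (by omega)
          exact mul_ne_zero (mul_ne_zero (mul_ne_zero n2 n2) nm) nt
        have key : (w 2 * w 2 * w (2*e-1) * w (2*e)) * (w (2*e+4) * w (2*e)) =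
            (w 2 * w 2 * w (2*e-1) * w (2*e)) *
              (w (2*e+3) * w (2*e+1) * w 2 ^ 2 - w 3 * w 1 * w (2*e+2)^2) := by
          linear_combination (w 2 * w (2*e)^2) * hP4
            - (w (2*e+2) * w (2*e+1)) * IH7
            + (w (2*e+2) * w (2*e+3)) * IH8
            + (w 2^2 * w (2*e+3) * w (2*e)) * IH6
            - (w 3 * w 1 * w (2*e-1) * w (2*e+2)) * IH5
            + (- w 3 * w 2^2 * w (2*e+3) * w (2*e)^3
               + w 3^2 * w (2*e+2) * w (2*e+1)^2 * w (2*e-1) * (w 1 + 1)) * h1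
        exact mul_left_cancel₀ hnz1 key
      · -- general even case, y ≥ 3
        have hy3 : 3 ≤ t - e := by omega
        have IH1 := ih (t+1) (e+1) (by omega) (by omega) (by omega)
        rw [show t+1+(e+1) = t+e+2 by ring, show t+1-(e+1) = t-e by ring,
          show t+1+1 = t+2 by ring, show t+1-1 = t by ring, show e+1+1 = e+2 by ring,
          show e+1-1 = e by ring] at IH1
        have IH2 := ih (t-1) (e-1) (by omega) (by omega) (by omega)
        rw [show t-1+(e-1) = t+e-2 by ring, show t-1-(e-1) = t-e by ring,
          show t-1+1 = t by ring, show t-1-1 = t-2 by ring, show e-1+1 = e by ring,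
          show e-1-1 = e-2 by ring] at IH2
        have IH3 := ih (t+1) (e-1) (by omega) (by omega) (by omega)
        rw [show t+1+(e-1) = t+e by ring, show t+1-(e-1) = t-e+2 by ring,
          show t+1+1 = t+2 by ring, show t+1-1 = t by ring, show e-1+1 = e by ring,
          show e-1-1 = e-2 by ring] at IH3
        have IH4 := ih (t-1) (e+1) (by omega) (by omega) (by omega)
        rw [show t-1+(e+1) = t+e by ring, show t-1-(e+1) = t-e-2 by ring,
          show t-1+1 = t by ring, show t-1-1 = t-2 by ring, show e+1+1 = e+2 by ring,
          show e+1-1 = e by ring] at IH4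
        have IH5 := ih (t+e) 2 (by omega) (by omega) (by omega)
        rw [show (2:ℤ)+1 = 3 by ring, show (2:ℤ)-1 = 1 by ring] at IH5
        have IH6 := ih (t-e) 2 (by omega) (by omega) (by omega)
        rw [show (2:ℤ)+1 = 3 by ring, show (2:ℤ)-1 = 1 by ring] at IH6
        have hnz2 : w 2 ^ 2 ≠ 0 := pow_ne_zero 2 (hnz 2 (by norm_num))
        have key : w 2 ^ 2 * (w (2*t) * w (2*e)) = w 2 ^ 2 *
            (w (t+e+1) * w (t+e-1) * w (t-e)^2 - w (t-e+1) * w (t-e-1) * w (t+e)^2) := by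
          linear_combination (w 2 * w (2*e)) * hEt
            + (w (t-1)^2 * w t * w (t+2) - w (t-2) * w t * w (t+1)^2) * hEe
            - (w (t+e-2) * w (t-e)) * IH1
            - (w (t+2) * w t * w (e+1)^2 - w (e+2) * w e * w (t+1)^2) * IH2
            + (w (t+e) * w (t-e-2)) * IH3
            + (w (t+2) * w t * w (e-1)^2 - w e * w (e-2) * w (t+1)^2) * IH4
            + w (t-e)^2 * IH5
            - w (t+e)^2 * IH6
        exact mul_left_cancel₀ hnz2 key
    · -- odd case
      obtain ⟨t, ht⟩ := ho
      obtain ⟨f, hdf⟩ : ∃ f : ℤ, x - y = 2*f+1 := ⟨(x-y-1)/2, by omega⟩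
      have hx : x = t + f + 1 := by omega
      have hyv : y = t - f := by omega
      subst hx
      subst hyv
      rw [show t+f+1+(t-f) = 2*t+1 by ring, show t+f+1-(t-f) = 2*f+1 by ring,
        show t+f+1+1 = t+f+2 by ring, show t+f+1-1 = t+f by ring]
      have hOt := hO t
      have hOf := hO f
      have IH1 := ih (t+1) (f+1) (by omega) (by omega) (by omega)
      rw [show t+1+(f+1) = t+f+2 by ring, show t+1-(f+1) = t-f by ring,
        show t+1+1 = t+2 by ring, show t+1-1 = t by ring, show f+1+1 = f+2 by ring,
        show f+1-1 = f by ring] at IH1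
      have IH2 := ih t f (by omega) (by omega) (by omega)
      have IH3 := ih (t+1) f (by omega) (by omega) (by omega)
      rw [show t+1+f = t+f+1 by ring, show t+1-f = t-f+1 by ring,
        show t+1+1 = t+2 by ring, show t+1-1 = t by ring] at IH3
      have IH4 := ih t (f+1) (by omega) (by omega) (by omega)
      rw [show t+(f+1) = t+f+1 by ring, show t-(f+1) = t-f-1 by ring,
        show f+1+1 = f+2 by ring, show f+1-1 = f by ring] at IH4
      linear_combination w (2*f+1) * hOt
        + (w (t+2) * w t ^3 - w (t-1) * w (t+1)^3) * hOf
        - (w (t+f) * w (t-f)) * IH1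
        - (w (t+2) * w t * w (f+1)^2 - w (f+2) * w f * w (t+1)^2) * IH2
        + (w (t+f+1) * w (t-f-1)) * IH3
        + (w (t+2) * w t * w f^2 - w (f+1) * w (f-1) * w (t+1)^2) * IH4

end EDSAux

section Glue
variable {K : Type*} [Field K] (W : WeierstrassCurve K)

noncomputable def Jmap : K[X] →+* FractionRing (WeierstrassCurve.toAffine W).CoordinateRing :=
  (algebraMap _ _).comp ((Affine.CoordinateRing.mk W).comp (C : K[X] →+* K[X][Y]))

lemma Jmap_injective : Function.Injective (Jmap W) := by
  have h1 : Function.Injective (algebraMap K[X] (WeierstrassCurve.toAffine W).CoordinateRing) :=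
    (Affine.CoordinateRing.basis W).algebraMap_injective
  have h2 : Function.Injective
      (algebraMap (WeierstrassCurve.toAffine W).CoordinateRing
        (FractionRing (WeierstrassCurve.toAffine W).CoordinateRing)) :=
    IsFractionRing.injective _ _
  exact h2.comp h1

noncomputable def wseq (n : ℤ) : FractionRing (WeierstrassCurve.toAffine W).CoordinateRing :=
  algebraMap _ _ (Affine.CoordinateRing.mk W (W.Ψ n))

lemma wseq_sq (n : ℤ) : wseq W n ^ 2 = Jmap W (W.ΨSq n) := by
  rw [wseq, Jmap, ← map_pow, Affine.CoordinateRing.mk_Ψ_sq]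
  rfl

lemma wseq_zero : wseq W 0 = 0 := by simp [wseq]

lemma wseq_one : wseq W 1 = 1 := by simp [wseq]

lemma wseq_neg (n : ℤ) : wseq W (-n) = - wseq W n := by simp [wseq, Ψ_neg]

lemma wseq_ne_zero [NumberField K] (n : ℤ) (hn : n ≠ 0) : wseq W n ≠ 0 := by
  intro h
  have h2 : Jmap W (W.ΨSq n) = 0 := by rw [← wseq_sq, h]; ring
  rw [← map_zero (Jmap W)] at h2
  exact W.ΨSq_ne_zero (n := n) (by exact_mod_cast hn) (Jmap_injective W h2)

lemma wseq_O (k : ℤ) :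
    wseq W (2*k+1) = wseq W (k+2) * wseq W k ^ 3 - wseq W (k-1) * wseq W (k+1) ^ 3 := by
  have h := congrArg (fun z => (algebraMap (WeierstrassCurve.toAffine W).CoordinateRing
      (FractionRing (WeierstrassCurve.toAffine W).CoordinateRing))
      (Affine.CoordinateRing.mk W z)) (W.Ψ_odd k)
  simp only [map_add, map_sub, map_mul, map_pow, AdjoinRoot.mk_self, zero_mul, mul_zero,
    add_zero, map_zero] at h
  exact h

lemma wseq_E (k : ℤ) :
    wseq W (2*k) * wseq W 2 =
      wseq W (k-1) ^ 2 * wseq W k * wseq W (k+2) - wseq W (k-2) * wseq W k * wseq W (k+1) ^ 2 := by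
  have h := congrArg (fun z => (algebraMap (WeierstrassCurve.toAffine W).CoordinateRing
      (FractionRing (WeierstrassCurve.toAffine W).CoordinateRing))
      (Affine.CoordinateRing.mk W z)) (W.Ψ_even k)
  simp only [map_sub, map_mul, map_pow] at h
  rw [wseq, wseq, wseq, wseq, wseq, wseq, show W.Ψ 2 = W.ψ₂ from Ψ_two W]
  exact h

lemma wseq_phi (k : ℤ) :
    wseq W (k+1) * wseq W (k-1) = Jmap W X * Jmap W (W.ΨSq k) - Jmap W (W.Φ k) := by
  have e1 : W.Ψ (k+1) = C (W.preΨ (k+1)) * if Even (k+1) then W.ψ₂ else 1 := rfl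
  have e2 : W.Ψ (k-1) = C (W.preΨ (k-1)) * if Even (k-1) then W.ψ₂ else 1 := rfl
  have e3 : W.Φ k = X * W.ΨSq k - W.preΨ (k+1) * W.preΨ (k-1) * if Even k then 1 else W.Ψ₂Sq :=
    rfl
  have hk1 : Even (k+1) ↔ ¬ Even k := Int.even_add_one
  have hk2 : Even (k-1) ↔ ¬ Even k := Int.even_sub_one
  have hmain : Affine.CoordinateRing.mk W (W.Ψ (k+1) * W.Ψ (k-1)) =
      Affine.CoordinateRing.mk W (C (X * W.ΨSq k - W.Φ k)) := by
    by_cases h : Even k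
    · rw [e1, e2, e3, if_neg (fun hc => (hk1.mp hc) h), if_neg (fun hc => (hk2.mp hc) h),
        if_pos h]
      simp only [mul_one, C_mul, C_sub, map_mul, map_sub]
      ring
    · rw [e1, e2, e3, if_pos (hk1.mpr h), if_pos (hk2.mpr h), if_neg h]
      simp only [C_mul, C_sub, map_mul, map_sub]
      linear_combination (Affine.CoordinateRing.mk W (C (W.preΨ (k+1))) *
        Affine.CoordinateRing.mk W (C (W.preΨ (k-1)))) * Affine.CoordinateRing.mk_ψ₂_sq W
  have h4 : wseq W (k+1) * wseq W (k-1) =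
      algebraMap _ _ (Affine.CoordinateRing.mk W (C (X * W.ΨSq k - W.Φ k))) := by
    rw [wseq, wseq, ← map_mul, ← map_mul, hmain]
  rw [h4]
  simp only [C_sub, C_mul, map_sub, map_mul]
  rfl

end Glue

section Final
variable {K : Type*} [Field K] [NumberField K] (W : WeierstrassCurve K)

lemma poly_main (n m : ℤ) (hm : 0 < m) (hmn : m ≤ n) :
    (W.Φ m * W.ΨSq n - W.Φ n * W.ΨSq m) ^ 2 = W.ΨSq (n + m) * W.ΨSq (n - m) := by
  apply Jmap_injective W
  have main := eds_main (wseq W) (wseq_zero W) (wseq_one W) (wseq_neg W) (wseq_ne_zero W)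
    (wseq_O W) (wseq_E W) n m (le_of_lt hm) hmn
  have pn := wseq_phi W n
  have pm := wseq_phi W m
  have sn := wseq_sq W n
  have sm := wseq_sq W m
  have e1 : Jmap W (W.Φ m * W.ΨSq n - W.Φ n * W.ΨSq m) = wseq W (n+m) * wseq W (n-m) := by
    rw [map_sub, map_mul, map_mul]
    linear_combination (-1 : _) * main - wseq W m ^2 * pn + wseq W n ^2 * pm
      + (- Jmap W (W.Φ m) + Jmap W X * Jmap W (W.ΨSq m)) * sn
      + (Jmap W (W.Φ n) - Jmap W X * Jmap W (W.ΨSq n)) * sm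
  rw [map_pow, map_mul, e1, ← wseq_sq, ← wseq_sq]
  ring

end Final

/-- Let `E` be an elliptic curve over a number field `K` given by a Weierstrass
equation, with division polynomials `ψ_n` and `φ_n = xψ_n² − ψ_{n+1}ψ_{n−1}`, regarded (via the
on-curve substitution) as polynomials in `x` alone (these are `W.ΨSq n` and `W.Φ n` in Mathlib).
Then for all positive integers `n`, `m` one has the polynomial identity
`(φ_m(x)·ψ_n²(x) − φ_n(x)·ψ_m²(x))² = ψ_{n+m}²(x)·ψ_{|n−m|}²(x)`. -/
theorem statement4 (K : Type*) [Field K] [NumberField K]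
    (W : WeierstrassCurve K) (hΔ : W.Δ ≠ 0) (n m : ℤ) (hn : 0 < n) (hm : 0 < m) :
    (W.Φ m * W.ΨSq n - W.Φ n * W.ΨSq m) ^ 2 = W.ΨSq (n + m) * W.ΨSq |n - m| := by
  rcases le_total m n with h | h
  · rw [abs_of_nonneg (by omega : (0:ℤ) ≤ n - m)]
    exact poly_main W n m hm h
  · rw [abs_of_nonpos (by omega : n - m ≤ (0:ℤ)), neg_sub]
    have h2 := poly_main W m n hn h
    rw [show n + m = m + n by ring]
    linear_combination h2
end

section
/- Let E be an elliptic curve over ℚ given by a Weierstrass equation with integer coefficients and let P ∈ E(ℚ). Then B_1(E,P) divides B_n(E,P) for every n ∈ ℕ; in particular the sequence β_n(E,P) = ±B_n(E,P)/B_1(E,P) is a sequence of integers. -/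
set_option linter.unusedSectionVars false
set_option linter.unusedVariables false
set_option maxHeartbeats 1000000


open WeierstrassCurve Polynomial

noncomputable section

attribute [local instance] Classical.propDecidable

namespace EDS

variable (W : WeierstrassCurve ℤ)

/-- The curve `E` over `ℚ`, given by a Weierstrass equation with integer coefficients. -/
abbrev WQ : WeierstrassCurve ℚ := W.baseChange ℚ

/-- The `x`-coordinate of a rational point (junk value `0` at the point at infinity). -/
def ptX : (WQ W).toAffine.Point → ℚ
  | .zero => 0
  | @WeierstrassCurve.Affine.Point.some _ _ _ x _ _ => x

/-- The `y`-coordinate of a rational point (junk value `0` at the point at infinity). -/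
def ptY : (WQ W).toAffine.Point → ℚ
  | .zero => 0
  | @WeierstrassCurve.Affine.Point.some _ _ _ _ y _ => y

/-- `B n` is the nonnegative square root of the denominator of `x(nP)`, with `B n = 0` when
`nP = O`. -/
def B (P : (WQ W).toAffine.Point) (n : ℕ) : ℕ :=
  if n • P = 0 then 0 else Nat.sqrt (ptX W (n • P)).den

/-- `ψ n (x(P), y(P))`, the `n`-th division polynomial evaluated at `P`. -/
def ψval (P : (WQ W).toAffine.Point) (n : ℕ) : ℚ :=
  ((WQ W).Ψ n).evalEval (ptX W P) (ptY W P)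

/-- `β n = sign(ψ_n(x(P),y(P))) * B n / B 1`. -/
def β (P : (WQ W).toAffine.Point) (n : ℕ) : ℚ :=
  (SignType.sign (ψval W P n) : ℚ) * (B W P n : ℚ) / (B W P 1 : ℚ)

/-- Reduction modulo `p` of a `p`-integral rational number. -/
def redQ (p : ℕ) (x : ℚ) : ZMod p := (x.num : ZMod p) * (x.den : ZMod p)⁻¹

/-- The reduced curve over `𝔽_p`. -/
abbrev Wred (p : ℕ) : WeierstrassCurve (ZMod p) := W.map (Int.castRingHom (ZMod p))

/-- The point `Q` reduces modulo `p` to a nonsingular point of the reduced curve (the point at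
infinity, to which `Q` reduces when `p` divides the denominator of `x(Q)`, is nonsingular). -/
def redNonsingular (p : ℕ) : (WQ W).toAffine.Point → Prop
  | .zero => True
  | @WeierstrassCurve.Affine.Point.some _ _ _ x y _ =>
      (p ∣ x.den) ∨
        (¬ p ∣ x.den ∧ ¬ p ∣ y.den ∧
          (Wred W p).toAffine.Nonsingular (redQ p x) (redQ p y))

/-- `r(p, P)`: the least positive integer `r` such that `rP` reduces modulo `p` to a
nonsingular point, i.e. the order of `P` in `E(ℚ_p)/E₀(ℚ_p)`. -/
def rOrd (p : ℕ) (P : (WQ W).toAffine.Point) : ℕ :=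
  sInf {r : ℕ | 0 < r ∧ redNonsingular W p (r • P)}

/-- `M(P)`: the least common multiple of `r(p,P)` over all primes `p`, i.e. the least positive
integer divisible by `r(p,P)` for every prime `p`. -/
def MP (P : (WQ W).toAffine.Point) : ℕ :=
  sInf {M : ℕ | 0 < M ∧ ∀ p : ℕ, p.Prime → rOrd W p P ∣ M}

end EDS

namespace St13Aux
variable {p : ℕ} [hp : Fact p.Prime]

def Vge (p : ℕ) (k : ℤ) (q : ℚ) : Prop := q = 0 ∨ k ≤ padicValRat p q

lemma vge_zero (k : ℤ) : Vge p k 0 := Or.inl rfl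

lemma vge_of_ne {k : ℤ} {q : ℚ} (hq : q ≠ 0) (h : Vge p k q) : k ≤ padicValRat p q :=
  h.resolve_left hq

lemma vge_of_v {k : ℤ} {q : ℚ} (h : k ≤ padicValRat p q) : Vge p k q := Or.inr h

lemma vge_of_le {k k' : ℤ} {q : ℚ} (hk : k' ≤ k) (h : Vge p k q) : Vge p k' q :=
  h.imp id fun h' => le_trans hk h'

lemma vge_le {k k' : ℤ} {q : ℚ} (h : Vge p k q) (hk : k' ≤ k) : Vge p k' q :=
  vge_of_le hk h

lemma vge_add {k : ℤ} {a b : ℚ} (ha : Vge p k a) (hb : Vge p k b) : Vge p k (a + b) := by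
  rcases ha with rfl | ha
  · simpa using hb
  rcases hb with rfl | hb
  · rw [add_zero]; exact Or.inr ha
  by_cases hab : a + b = 0
  · exact Or.inl hab
  · exact Or.inr <| le_trans (le_min ha hb) (padicValRat.min_le_padicValRat_add hab)

lemma vge_neg {k : ℤ} {a : ℚ} (ha : Vge p k a) : Vge p k (-a) := by
  rcases ha with rfl | ha
  · simpa using vge_zero k
  · exact Or.inr <| by rwa [padicValRat.neg]

lemma vge_sub {k : ℤ} {a b : ℚ} (ha : Vge p k a) (hb : Vge p k b) : Vge p k (a - b) := by
  rw [sub_eq_add_neg]; exact vge_add ha (vge_neg hb)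

lemma vge_mul {k l : ℤ} {a b : ℚ} (ha : Vge p k a) (hb : Vge p l b) : Vge p (k + l) (a * b) := by
  rcases ha with rfl | ha
  · simpa using vge_zero _
  rcases hb with rfl | hb
  · simpa using vge_zero _
  by_cases ha0 : a = 0
  · exact Or.inl (by simp [ha0])
  by_cases hb0 : b = 0
  · exact Or.inl (by simp [hb0])
  · exact Or.inr <| by rw [padicValRat.mul ha0 hb0]; exact add_le_add ha hb

lemma vge_mul' {k l m : ℤ} {a b : ℚ} (ha : Vge p k a) (hb : Vge p l b) (h : m ≤ k + l) :
    Vge p m (a * b) := vge_of_le h (vge_mul ha hb)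

lemma vge_intCast (n : ℤ) : Vge p 0 (n : ℚ) := by
  by_cases hn : n = 0
  · exact Or.inl (by simp [hn])
  · exact Or.inr <| by
      rw [padicValRat.of_int]
      exact_mod_cast Int.ofNat_nonneg _

lemma vge_int_mul {k : ℤ} {q : ℚ} (n : ℤ) (h : Vge p k q) : Vge p k ((n : ℚ) * q) := by
  simpa using vge_mul (vge_intCast n) h

lemma vge_sq {k : ℤ} {q : ℚ} (h : Vge p k q) : Vge p (2 * k) (q ^ 2) := by
  have := vge_mul h h
  rw [sq]; rwa [(by ring : (2 : ℤ) * k = k + k)]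

lemma vge_cube {k : ℤ} {q : ℚ} (h : Vge p k q) : Vge p (3 * k) (q ^ 3) := by
  have := vge_mul (vge_mul h h) h
  rw [(by ring : q ^ 3 = q * q * q), (by ring : (3 : ℤ) * k = k + k + k)]
  exact this

/-- If `v a < k ≤ v b` then `a + b ≠ 0` and `v (a+b) = v a`. -/
lemma vadd_eq {k : ℤ} {a b : ℚ} (ha : a ≠ 0) (hb : Vge p k b)
    (hlt : padicValRat p a < k) : a + b ≠ 0 ∧ padicValRat p (a + b) = padicValRat p a := by
  by_cases hb0 : b = 0
  · simp [hb0, ha]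
  have hvb : k ≤ padicValRat p b := vge_of_ne hb0 hb
  have hab : a + b ≠ 0 := by
    intro h
    have : a = -b := by linarith [congrArg (· - b) h]
    rw [this, padicValRat.neg] at hlt; omega
  refine ⟨hab, le_antisymm ?_ ?_⟩
  · have h2 : min (padicValRat p (a + b)) (padicValRat p (-b)) ≤ padicValRat p a := by
      have := padicValRat.min_le_padicValRat_add (p := p) (q := a + b) (r := -b)
        (by simpa using ha)
      simpa using this
    rcases le_or_gt (padicValRat p (a + b)) (padicValRat p (-b)) with h | h
    · rwa [min_eq_left h] at h2
    · rw [min_eq_right h.le, padicValRat.neg] at h2; omega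
  · have := padicValRat.min_le_padicValRat_add (p := p) (q := a) (r := b) hab
    exact le_trans (le_min le_rfl (by omega)) this

lemma vunit {r : ℚ} (h : Vge p 1 r) : (1 : ℚ) + r ≠ 0 ∧ padicValRat p (1 + r) = 0 := by
  have := vadd_eq (p := p) (a := (1 : ℚ)) (b := r) one_ne_zero h (by simp)
  simpa using this

section curve
variable (a1 a2 a3 a4 a6 : ℤ) {x y : ℚ}

/-- If a point on the curve has `v y < 0` then `v x < 0`. -/
lemma LB (heq : y ^ 2 + (a1 : ℚ) * x * y + (a3 : ℚ) * y
      = x ^ 3 + (a2 : ℚ) * x ^ 2 + (a4 : ℚ) * x + (a6 : ℚ))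
    (hy : y ≠ 0) (hvy : padicValRat p y < 0) : x ≠ 0 ∧ padicValRat p x < 0 := by
  by_contra hcon
  have hx : Vge p 0 x := by
    by_cases h0 : x = 0
    · exact Or.inl h0
    · push_neg at hcon
      exact Or.inr (hcon h0)
  set w := padicValRat p y with hw
  have hyv : Vge p w y := Or.inr le_rfl
  have hrhs : Vge p w (x ^ 3 + (a2 : ℚ) * x ^ 2 + (a4 : ℚ) * x + (a6 : ℚ)
      - (a1 : ℚ) * x * y - (a3 : ℚ) * y) := by
    refine vge_sub (vge_sub (vge_add (vge_add (vge_add ?_ ?_) ?_) ?_) ?_) ?_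
    · exact vge_le (by simpa using vge_cube hx) (by omega)
    · exact vge_le (vge_int_mul a2 (by simpa using vge_sq hx)) (by omega)
    · exact vge_of_le (by omega) (vge_int_mul a4 hx)
    · exact vge_le (vge_intCast a6) (by omega)
    · refine vge_mul' (vge_int_mul a1 hx) hyv (by omega)
    · exact vge_int_mul a3 hyv
  have hy2 : y ^ 2 = x ^ 3 + (a2 : ℚ) * x ^ 2 + (a4 : ℚ) * x + (a6 : ℚ)
      - (a1 : ℚ) * x * y - (a3 : ℚ) * y := by linear_combination heq
  rw [← hy2] at hrhs
  have : w ≤ padicValRat p (y ^ 2) := vge_of_ne (pow_ne_zero 2 hy) hrhs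
  rw [padicValRat.pow y] at this
  push_cast at this
  omega

/-- Exact valuations at a point on the curve with `v x < 0`. -/
lemma LA (heq : y ^ 2 + (a1 : ℚ) * x * y + (a3 : ℚ) * y
      = x ^ 3 + (a2 : ℚ) * x ^ 2 + (a4 : ℚ) * x + (a6 : ℚ))
    (hx : x ≠ 0) (hvx : padicValRat p x < 0) :
    ∃ k : ℤ, 1 ≤ k ∧ y ≠ 0 ∧ padicValRat p x = -(2 * k) ∧ padicValRat p y = -(3 * k) := by
  set u := padicValRat p x with hu
  have hxu : Vge p u x := Or.inr le_rfl
  have hx3 : padicValRat p (x ^ 3) = 3 * u := by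
    rw [padicValRat.pow x]; push_cast; ring
  -- y ≠ 0
  have hy : y ≠ 0 := by
    intro hy0
    have h0 : x ^ 3 = -((a2 : ℚ) * x ^ 2 + (a4 : ℚ) * x + (a6 : ℚ)) := by
      linear_combination -heq + ((a1 : ℚ) * x + (a3 : ℚ) + y) * hy0
    have hv : Vge p (2 * u) (x ^ 3) := by
      rw [h0]
      refine vge_neg (vge_add (vge_add ?_ ?_) ?_)
      · exact vge_int_mul a2 (vge_sq hxu)
      · exact vge_of_le (by omega) (vge_int_mul a4 hxu)
      · exact vge_le (vge_intCast a6) (by omega)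
    have := vge_of_ne (pow_ne_zero 3 hx) hv
    rw [hx3] at this; omega
  set w := padicValRat p y with hw
  have hyw : Vge p w y := Or.inr le_rfl
  have hy2 : padicValRat p (y ^ 2) = 2 * w := by
    rw [padicValRat.pow y]; push_cast; ring
  -- w < 0, indeed w < u
  have hwu : w < u := by
    by_contra hcon
    push_neg at hcon -- u ≤ w
    have hv : Vge p (2 * u) (x ^ 3) := by
      have h0 : x ^ 3 = y ^ 2 + (a1 : ℚ) * x * y + (a3 : ℚ) * y
          - (a2 : ℚ) * x ^ 2 - (a4 : ℚ) * x - (a6 : ℚ) := by linear_combination -heq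
      rw [h0]
      refine vge_sub (vge_sub (vge_sub (vge_add (vge_add ?_ ?_) ?_) ?_) ?_) ?_
      · exact vge_le (vge_sq hyw) (by omega)
      · exact vge_mul' (vge_int_mul a1 hxu) hyw (by omega)
      · exact vge_of_le (by omega) (vge_int_mul a3 hyw)
      · exact vge_int_mul a2 (vge_sq hxu)
      · exact vge_of_le (by omega) (vge_int_mul a4 hxu)
      · exact vge_le (vge_intCast a6) (by omega)
    have := vge_of_ne (pow_ne_zero 3 hx) hv
    rw [hx3] at this; omega
  have hwneg : w < 0 := by omega
  -- the difference y² - x³ has valuation ≥ u + w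
  have hdiff : Vge p (u + w) (y ^ 2 - x ^ 3) := by
    have h0 : y ^ 2 - x ^ 3 = (a2 : ℚ) * x ^ 2 + (a4 : ℚ) * x + (a6 : ℚ)
        - (a1 : ℚ) * x * y - (a3 : ℚ) * y := by linear_combination heq
    rw [h0]
    refine vge_sub (vge_sub (vge_add (vge_add ?_ ?_) ?_) ?_) ?_
    · exact vge_le (vge_int_mul a2 (vge_sq hxu)) (by omega)
    · exact vge_of_le (by omega) (vge_int_mul a4 hxu)
    · exact vge_le (vge_intCast a6) (by omega)
    · exact vge_mul' (vge_int_mul a1 hxu) hyw (by omega)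
    · exact vge_of_le (by omega) (vge_int_mul a3 hyw)
  -- 2w = 3u
  have h23 : 2 * w = 3 * u := by
    rcases lt_trichotomy (2 * w) (3 * u) with h | h | h
    · exfalso
      have hv : Vge p (3 * u) (-(x ^ 3)) := Or.inr (by rw [padicValRat.neg, hx3])
      have := vadd_eq (pow_ne_zero 2 hy) hv (by rw [hy2]; omega)
      rw [← sub_eq_add_neg] at this
      have h2 := vge_of_ne this.1 hdiff
      rw [this.2, hy2] at h2; omega
    · exact h
    · exfalso
      have hv : Vge p (2 * w) (y ^ 2) := Or.inr (by rw [hy2])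
      have := vadd_eq (a := -(x ^ 3)) (by simpa using pow_ne_zero 3 hx) hv
        (by rw [padicValRat.neg, hx3]; omega)
      rw [neg_add_eq_sub] at this
      have h2 := vge_of_ne this.1 hdiff
      rw [this.2, padicValRat.neg, hx3] at h2; omega
  exact ⟨u - w, by omega, hy, by omega, by omega⟩

end curve

lemma vge_two {p : ℕ} [Fact p.Prime] : Vge p 0 (2 : ℚ) := by
  have h := vge_intCast (p := p) 2
  rwa [show ((2 : ℤ) : ℚ) = 2 by norm_num] at h

lemma vge_three {p : ℕ} [Fact p.Prime] : Vge p 0 (3 : ℚ) := by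
  have h := vge_intCast (p := p) 3
  rwa [show ((3 : ℤ) : ℚ) = 3 by norm_num] at h

section core
variable (a1 a2 a3 a4 a6 : ℤ)

/-- Transfer of the Weierstrass equation to `(t, s) = (x/y, 1/y)` coordinates. -/
lemma ts_curve {x y : ℚ} (hy : y ≠ 0)
    (heq : y ^ 2 + (a1 : ℚ) * x * y + (a3 : ℚ) * y
      = x ^ 3 + (a2 : ℚ) * x ^ 2 + (a4 : ℚ) * x + (a6 : ℚ)) :
    (x / y) ^ 3 + (a2 : ℚ) * (x / y) ^ 2 * y⁻¹ + (a4 : ℚ) * (x / y) * y⁻¹ ^ 2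
      + (a6 : ℚ) * y⁻¹ ^ 3 - (a1 : ℚ) * (x / y) * y⁻¹ - (a3 : ℚ) * y⁻¹ ^ 2 - y⁻¹ = 0 := by
  have hnum : x ^ 3 + (a2 : ℚ) * x ^ 2 + (a4 : ℚ) * x + (a6 : ℚ)
      - (a1 : ℚ) * x * y - (a3 : ℚ) * y - y ^ 2 = 0 := by linear_combination -heq
  have hrw : (x / y) ^ 3 + (a2 : ℚ) * (x / y) ^ 2 * y⁻¹ + (a4 : ℚ) * (x / y) * y⁻¹ ^ 2
      + (a6 : ℚ) * y⁻¹ ^ 3 - (a1 : ℚ) * (x / y) * y⁻¹ - (a3 : ℚ) * y⁻¹ ^ 2 - y⁻¹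
      = (x ^ 3 + (a2 : ℚ) * x ^ 2 + (a4 : ℚ) * x + (a6 : ℚ)
      - (a1 : ℚ) * x * y - (a3 : ℚ) * y - y ^ 2) / y ^ 3 := by
    field_simp
  rw [hrw, hnum, zero_div]

variable {p : ℕ} [hp : Fact p.Prime]

set_option maxHeartbeats 2000000 in
/-- Key lemma: the coordinates of the negated sum of two points lying `m`-deep in the
kernel of reduction mod `p`. -/
lemma core {m k1 k2 : ℤ} (hm : 1 ≤ m) (hk1 : m ≤ k1) (hk2 : m ≤ k2)
    {x1 y1 x2 y2 L x3 y3 : ℚ}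
    (hx1 : x1 ≠ 0) (hy1 : y1 ≠ 0) (hx2 : x2 ≠ 0) (hy2 : y2 ≠ 0)
    (hvx1 : padicValRat p x1 = -(2 * k1)) (hvy1 : padicValRat p y1 = -(3 * k1))
    (hvx2 : padicValRat p x2 = -(2 * k2)) (hvy2 : padicValRat p y2 = -(3 * k2))
    (heq1 : y1 ^ 2 + (a1 : ℚ) * x1 * y1 + (a3 : ℚ) * y1
      = x1 ^ 3 + (a2 : ℚ) * x1 ^ 2 + (a4 : ℚ) * x1 + (a6 : ℚ))
    (heq2 : y2 ^ 2 + (a1 : ℚ) * x2 * y2 + (a3 : ℚ) * y2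
      = x2 ^ 3 + (a2 : ℚ) * x2 ^ 2 + (a4 : ℚ) * x2 + (a6 : ℚ))
    (heq3 : y3 ^ 2 + (a1 : ℚ) * x3 * y3 + (a3 : ℚ) * y3
      = x3 ^ 3 + (a2 : ℚ) * x3 ^ 2 + (a4 : ℚ) * x3 + (a6 : ℚ))
    (hx3 : x3 = L ^ 2 + (a1 : ℚ) * L - (a2 : ℚ) - x1 - x2)
    (hy3 : y3 = L * (x3 - x1) + y1)
    (hL : (x1 ≠ x2 ∧ L = (y1 - y2) / (x1 - x2)) ∨
      (x1 = x2 ∧ y1 = y2 ∧ (2 * y1 + (a1 : ℚ) * x1 + (a3 : ℚ)) ≠ 0 ∧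
        L = (3 * x1 ^ 2 + 2 * (a2 : ℚ) * x1 + (a4 : ℚ) - (a1 : ℚ) * y1)
          / (2 * y1 + (a1 : ℚ) * x1 + (a3 : ℚ)))) :
    x3 ≠ 0 ∧ padicValRat p x3 ≤ -(2 * m) := by
  obtain ⟨t1, ht1⟩ : ∃ t, t = x1 / y1 := ⟨_, rfl⟩
  obtain ⟨s1, hs1⟩ : ∃ s, s = y1⁻¹ := ⟨_, rfl⟩
  obtain ⟨t2, ht2⟩ : ∃ t, t = x2 / y2 := ⟨_, rfl⟩
  obtain ⟨s2, hs2⟩ : ∃ s, s = y2⁻¹ := ⟨_, rfl⟩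
  obtain ⟨ν, hν⟩ : ∃ v, v = y1 - L * x1 := ⟨_, rfl⟩
  have ht1ne : t1 ≠ 0 := ht1 ▸ div_ne_zero hx1 hy1
  have hs1ne : s1 ≠ 0 := hs1 ▸ inv_ne_zero hy1
  have ht2ne : t2 ≠ 0 := ht2 ▸ div_ne_zero hx2 hy2
  have hs2ne : s2 ≠ 0 := hs2 ▸ inv_ne_zero hy2
  have hvt1 : padicValRat p t1 = k1 := by
    rw [ht1, padicValRat.div hx1 hy1, hvx1, hvy1]; ring
  have hvs1 : padicValRat p s1 = 3 * k1 := by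
    rw [hs1, padicValRat.inv, hvy1]; ring
  have hvt2 : padicValRat p t2 = k2 := by
    rw [ht2, padicValRat.div hx2 hy2, hvx2, hvy2]; ring
  have hvs2 : padicValRat p s2 = 3 * k2 := by
    rw [hs2, padicValRat.inv, hvy2]; ring
  have vt1 : Vge p m t1 := Or.inr (by omega)
  have vt2 : Vge p m t2 := Or.inr (by omega)
  have vs1 : Vge p (3 * m) s1 := Or.inr (by omega)
  have vs2 : Vge p (3 * m) s2 := Or.inr (by omega)
  have F1 : t1 ^ 3 + (a2 : ℚ) * t1 ^ 2 * s1 + (a4 : ℚ) * t1 * s1 ^ 2 + (a6 : ℚ) * s1 ^ 3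
      - (a1 : ℚ) * t1 * s1 - (a3 : ℚ) * s1 ^ 2 - s1 = 0 := by
    rw [ht1, hs1]; exact ts_curve a1 a2 a3 a4 a6 hy1 heq1
  have F2 : t2 ^ 3 + (a2 : ℚ) * t2 ^ 2 * s2 + (a4 : ℚ) * t2 * s2 ^ 2 + (a6 : ℚ) * s2 ^ 3
      - (a1 : ℚ) * t2 * s2 - (a3 : ℚ) * s2 ^ 2 - s2 = 0 := by
    rw [ht2, hs2]; exact ts_curve a1 a2 a3 a4 a6 hy2 heq2
  have hl1 : 1 = L * t1 + ν * s1 := by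
    rw [ht1, hs1, hν]; field_simp; ring
  -- the slope in `(t,s)`-coordinates has valuation at least `2m`
  have main : ν ≠ 0 ∧ Vge p (2 * m) (-(L / ν)) := by
    rcases hL with ⟨hx12, hLdef⟩ | ⟨hx12, hy12, hDl, hLdef⟩
    · -- chord case
      have hkey : (s2 - s1) * (1 + ((a1 : ℚ) * t2 + (a3 : ℚ) * (s1 + s2) - (a2 : ℚ) * t2 ^ 2
          - (a4 : ℚ) * t2 * (s1 + s2) - (a6 : ℚ) * (s1 ^ 2 + s1 * s2 + s2 ^ 2)))
          = (t2 - t1) * (t1 ^ 2 + t1 * t2 + t2 ^ 2 + (a2 : ℚ) * s1 * (t1 + t2)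
          + (a4 : ℚ) * s1 ^ 2 - (a1 : ℚ) * s1) := by
        linear_combination F1 - F2
      have hRq : Vge p 1 ((a1 : ℚ) * t2 + (a3 : ℚ) * (s1 + s2) - (a2 : ℚ) * t2 ^ 2
          - (a4 : ℚ) * t2 * (s1 + s2) - (a6 : ℚ) * (s1 ^ 2 + s1 * s2 + s2 ^ 2)) := by
        have h1 : Vge p 1 ((a1 : ℚ) * t2) := vge_le (vge_int_mul a1 vt2) (by omega)
        have h2 : Vge p 1 ((a3 : ℚ) * (s1 + s2)) :=
          vge_le (vge_int_mul a3 (vge_add vs1 vs2)) (by omega)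
        have h3 : Vge p 1 ((a2 : ℚ) * t2 ^ 2) := vge_le (vge_int_mul a2 (vge_sq vt2)) (by omega)
        have h4 : Vge p 1 ((a4 : ℚ) * t2 * (s1 + s2)) :=
          vge_le (vge_mul (vge_int_mul a4 vt2) (vge_add vs1 vs2)) (by omega)
        have h5 : Vge p 1 ((a6 : ℚ) * (s1 ^ 2 + s1 * s2 + s2 ^ 2)) := by
          refine vge_le (vge_int_mul a6 (vge_add (vge_add (vge_sq vs1) ?_) (vge_sq vs2)))
            (by omega)
          exact vge_le (vge_mul vs1 vs2) (by omega)
        exact vge_sub (vge_sub (vge_sub (vge_add h1 h2) h3) h4) h5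
      obtain ⟨hDqne, hvDq⟩ := vunit hRq
      have hNq : Vge p (2 * m) (t1 ^ 2 + t1 * t2 + t2 ^ 2 + (a2 : ℚ) * s1 * (t1 + t2)
          + (a4 : ℚ) * s1 ^ 2 - (a1 : ℚ) * s1) := by
        have h1 : Vge p (2 * m) (t1 ^ 2) := vge_sq vt1
        have h2 : Vge p (2 * m) (t1 * t2) := vge_le (vge_mul vt1 vt2) (by omega)
        have h3 : Vge p (2 * m) (t2 ^ 2) := vge_sq vt2
        have h4 : Vge p (2 * m) ((a2 : ℚ) * s1 * (t1 + t2)) :=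
          vge_le (vge_mul (vge_int_mul a2 vs1) (vge_add vt1 vt2)) (by omega)
        have h5 : Vge p (2 * m) ((a4 : ℚ) * s1 ^ 2) :=
          vge_le (vge_int_mul a4 (vge_sq vs1)) (by omega)
        have h6 : Vge p (2 * m) ((a1 : ℚ) * s1) := vge_le (vge_int_mul a1 vs1) (by omega)
        exact vge_sub (vge_add (vge_add (vge_add (vge_add h1 h2) h3) h4) h5) h6
      have ht12 : t2 - t1 ≠ 0 := by
        intro h0
        have hs12 : s2 - s1 = 0 := by
          rcases mul_eq_zero.mp (by rw [hkey, h0, zero_mul]) with h | h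
          · exact h
          · exact absurd h hDqne
        have hy12 : y1 = y2 := by
          have hss : y1⁻¹ = y2⁻¹ := by rw [← hs1, ← hs2]; linarith
          exact inv_injective hss
        apply hx12
        have htt : x1 / y1 = x2 / y2 := by rw [← ht1, ← ht2]; linarith
        rw [← hy12] at htt
        field_simp at htt
        exact htt
      have hy2line : y2 = L * x2 + ν := by
        rw [hν, hLdef]
        field_simp [sub_ne_zero.mpr hx12]
        ring
      have hl2 : 1 = L * t2 + ν * s2 := by
        rw [ht2, hs2]
        field_simp
        linear_combination hy2line
      have hsub : L * (t2 - t1) + ν * (s2 - s1) = 0 := by linear_combination hl1 - hl2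
      have hνne : ν ≠ 0 := by
        intro h0
        have hL0 : L = 0 := by
          rcases mul_eq_zero.mp (show L * (t2 - t1) = 0 by
            linear_combination hsub - (s2 - s1) * h0) with h | h
          · exact h
          · exact absurd h ht12
        apply hy1
        rw [hL0, zero_mul, sub_zero] at hν
        exact hν.symm.trans h0
      refine ⟨hνne, ?_⟩
      have hαdt : (-(L / ν)) * (t2 - t1) = s2 - s1 := by
        field_simp
        linear_combination -hsub
      have hαDq : (-(L / ν)) * (1 + ((a1 : ℚ) * t2 + (a3 : ℚ) * (s1 + s2) - (a2 : ℚ) * t2 ^ 2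
          - (a4 : ℚ) * t2 * (s1 + s2) - (a6 : ℚ) * (s1 ^ 2 + s1 * s2 + s2 ^ 2)))
          = t1 ^ 2 + t1 * t2 + t2 ^ 2 + (a2 : ℚ) * s1 * (t1 + t2)
          + (a4 : ℚ) * s1 ^ 2 - (a1 : ℚ) * s1 := by
        apply mul_left_cancel₀ ht12
        linear_combination hkey + (1 + ((a1 : ℚ) * t2 + (a3 : ℚ) * (s1 + s2)
          - (a2 : ℚ) * t2 ^ 2 - (a4 : ℚ) * t2 * (s1 + s2)
          - (a6 : ℚ) * (s1 ^ 2 + s1 * s2 + s2 ^ 2))) * hαdt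
      by_cases hNq0 : t1 ^ 2 + t1 * t2 + t2 ^ 2 + (a2 : ℚ) * s1 * (t1 + t2)
          + (a4 : ℚ) * s1 ^ 2 - (a1 : ℚ) * s1 = 0
      · left
        rcases mul_eq_zero.mp (by rw [hαDq, hNq0]) with h | h
        · exact h
        · exact absurd h hDqne
      · right
        have hαne : -(L / ν) ≠ 0 := by
          intro h0
          rw [h0, zero_mul] at hαDq
          exact hNq0 hαDq.symm
        have hdiv : -(L / ν) = (t1 ^ 2 + t1 * t2 + t2 ^ 2 + (a2 : ℚ) * s1 * (t1 + t2)
            + (a4 : ℚ) * s1 ^ 2 - (a1 : ℚ) * s1) / (1 + ((a1 : ℚ) * t2 + (a3 : ℚ) * (s1 + s2)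
            - (a2 : ℚ) * t2 ^ 2 - (a4 : ℚ) * t2 * (s1 + s2)
            - (a6 : ℚ) * (s1 ^ 2 + s1 * s2 + s2 ^ 2))) := by
          rw [eq_div_iff hDqne]; exact hαDq
        rw [hdiv, padicValRat.div hNq0 hDqne, hvDq]
        have := vge_of_ne hNq0 hNq
        omega
    · -- tangent case
      have e1 : t1 * y1 = x1 := by rw [ht1]; field_simp
      have e2 : s1 * y1 = 1 := by rw [hs1]; field_simp
      have hNl : y1 ^ 2 * (3 * t1 ^ 2 + 2 * (a2 : ℚ) * t1 * s1 + (a4 : ℚ) * s1 ^ 2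
          - (a1 : ℚ) * s1) = 3 * x1 ^ 2 + 2 * (a2 : ℚ) * x1 + (a4 : ℚ) - (a1 : ℚ) * y1 := by
        linear_combination (3 * (t1 * y1 + x1) + 2 * (a2 : ℚ) * s1 * y1) * e1
          + (2 * (a2 : ℚ) * x1 + (a4 : ℚ) * (s1 * y1 + 1) - (a1 : ℚ) * y1) * e2
      have hW : y1 ^ 2 * (1 + ((a1 : ℚ) * t1 + 2 * (a3 : ℚ) * s1 - (a2 : ℚ) * t1 ^ 2
          - 2 * (a4 : ℚ) * t1 * s1 - 3 * (a6 : ℚ) * s1 ^ 2))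
          = y1 ^ 2 + (a1 : ℚ) * x1 * y1 + 2 * (a3 : ℚ) * y1 - (a2 : ℚ) * x1 ^ 2
          - 2 * (a4 : ℚ) * x1 - 3 * (a6 : ℚ) := by
        linear_combination ((a1 : ℚ) * y1 - (a2 : ℚ) * (t1 * y1 + x1)
          - 2 * (a4 : ℚ) * s1 * y1) * e1
          + (2 * (a3 : ℚ) * y1 - 2 * (a4 : ℚ) * x1 - 3 * (a6 : ℚ) * (s1 * y1 + 1)) * e2
      have hbr : y1 ^ 2 * (1 + ((a1 : ℚ) * t1 + 2 * (a3 : ℚ) * s1 - (a2 : ℚ) * t1 ^ 2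
          - 2 * (a4 : ℚ) * t1 * s1 - 3 * (a6 : ℚ) * s1 ^ 2))
          = x1 * (3 * x1 ^ 2 + 2 * (a2 : ℚ) * x1 + (a4 : ℚ) - (a1 : ℚ) * y1)
          - y1 * (2 * y1 + (a1 : ℚ) * x1 + (a3 : ℚ)) := by
        linear_combination hW + 3 * heq1
      have hLD : L * (2 * y1 + (a1 : ℚ) * x1 + (a3 : ℚ))
          = 3 * x1 ^ 2 + 2 * (a2 : ℚ) * x1 + (a4 : ℚ) - (a1 : ℚ) * y1 := by
        rw [hLdef]; exact div_mul_cancel₀ _ hDl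
      have hRt : Vge p 1 ((a1 : ℚ) * t1 + 2 * (a3 : ℚ) * s1 - (a2 : ℚ) * t1 ^ 2
          - 2 * (a4 : ℚ) * t1 * s1 - 3 * (a6 : ℚ) * s1 ^ 2) := by
        have h1 : Vge p 1 ((a1 : ℚ) * t1) := vge_le (vge_int_mul a1 vt1) (by omega)
        have h2 : Vge p 1 (2 * (a3 : ℚ) * s1) :=
          vge_le (vge_mul (vge_mul vge_two (vge_intCast a3)) vs1) (by omega)
        have h3 : Vge p 1 ((a2 : ℚ) * t1 ^ 2) := vge_le (vge_int_mul a2 (vge_sq vt1)) (by omega)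
        have h4 : Vge p 1 (2 * (a4 : ℚ) * t1 * s1) :=
          vge_le (vge_mul (vge_mul (vge_mul vge_two (vge_intCast a4)) vt1) vs1) (by omega)
        have h5 : Vge p 1 (3 * (a6 : ℚ) * s1 ^ 2) :=
          vge_le (vge_mul (vge_mul vge_three (vge_intCast a6)) (vge_sq vs1)) (by omega)
        exact vge_sub (vge_sub (vge_sub (vge_add h1 h2) h3) h4) h5
      obtain ⟨hDtne, hvDt⟩ := vunit hRt
      have hνDt : ν * (2 * y1 + (a1 : ℚ) * x1 + (a3 : ℚ))
          = -(y1 ^ 2 * (1 + ((a1 : ℚ) * t1 + 2 * (a3 : ℚ) * s1 - (a2 : ℚ) * t1 ^ 2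
          - 2 * (a4 : ℚ) * t1 * s1 - 3 * (a6 : ℚ) * s1 ^ 2))) := by
        rw [hν]
        linear_combination hbr - x1 * hLD
      have hνne : ν ≠ 0 := by
        intro h0
        rw [h0, zero_mul] at hνDt
        have := neg_eq_zero.mp hνDt.symm
        rcases mul_eq_zero.mp this with h | h
        · exact pow_ne_zero 2 hy1 h
        · exact hDtne h
      refine ⟨hνne, ?_⟩
      have hαDt : (-(L / ν)) * (1 + ((a1 : ℚ) * t1 + 2 * (a3 : ℚ) * s1 - (a2 : ℚ) * t1 ^ 2
          - 2 * (a4 : ℚ) * t1 * s1 - 3 * (a6 : ℚ) * s1 ^ 2))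
          = 3 * t1 ^ 2 + 2 * (a2 : ℚ) * t1 * s1 + (a4 : ℚ) * s1 ^ 2 - (a1 : ℚ) * s1 := by
        have hc : ν * (-(L / ν)) = -L := by field_simp [hνne]
        apply mul_left_cancel₀ (mul_ne_zero hνne hDl)
        linear_combination ((2 * y1 + (a1 : ℚ) * x1 + (a3 : ℚ)) * (1 + ((a1 : ℚ) * t1
            + 2 * (a3 : ℚ) * s1 - (a2 : ℚ) * t1 ^ 2 - 2 * (a4 : ℚ) * t1 * s1
            - 3 * (a6 : ℚ) * s1 ^ 2))) * hc
          - (1 + ((a1 : ℚ) * t1 + 2 * (a3 : ℚ) * s1 - (a2 : ℚ) * t1 ^ 2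
            - 2 * (a4 : ℚ) * t1 * s1 - 3 * (a6 : ℚ) * s1 ^ 2)) * hLD
          - (3 * t1 ^ 2 + 2 * (a2 : ℚ) * t1 * s1 + (a4 : ℚ) * s1 ^ 2 - (a1 : ℚ) * s1) * hνDt
          + (1 + ((a1 : ℚ) * t1 + 2 * (a3 : ℚ) * s1 - (a2 : ℚ) * t1 ^ 2
            - 2 * (a4 : ℚ) * t1 * s1 - 3 * (a6 : ℚ) * s1 ^ 2)) * hNl
      have hNt : Vge p (2 * m) (3 * t1 ^ 2 + 2 * (a2 : ℚ) * t1 * s1 + (a4 : ℚ) * s1 ^ 2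
          - (a1 : ℚ) * s1) := by
        have h1 : Vge p (2 * m) (3 * t1 ^ 2) := by
          have := vge_mul (vge_three (p := p)) (vge_sq vt1)
          simpa using this
        have h2 : Vge p (2 * m) (2 * (a2 : ℚ) * t1 * s1) :=
          vge_le (vge_mul (vge_mul (vge_mul vge_two (vge_intCast a2)) vt1) vs1) (by omega)
        have h3 : Vge p (2 * m) ((a4 : ℚ) * s1 ^ 2) :=
          vge_le (vge_int_mul a4 (vge_sq vs1)) (by omega)
        have h4 : Vge p (2 * m) ((a1 : ℚ) * s1) := vge_le (vge_int_mul a1 vs1) (by omega)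
        exact vge_sub (vge_add (vge_add h1 h2) h3) h4
      by_cases hNt0 : 3 * t1 ^ 2 + 2 * (a2 : ℚ) * t1 * s1 + (a4 : ℚ) * s1 ^ 2
          - (a1 : ℚ) * s1 = 0
      · left
        rcases mul_eq_zero.mp (by rw [hαDt, hNt0]) with h | h
        · exact h
        · exact absurd h hDtne
      · right
        have hdiv : -(L / ν) = (3 * t1 ^ 2 + 2 * (a2 : ℚ) * t1 * s1 + (a4 : ℚ) * s1 ^ 2
            - (a1 : ℚ) * s1) / (1 + ((a1 : ℚ) * t1 + 2 * (a3 : ℚ) * s1 - (a2 : ℚ) * t1 ^ 2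
            - 2 * (a4 : ℚ) * t1 * s1 - 3 * (a6 : ℚ) * s1 ^ 2)) := by
          rw [eq_div_iff hDtne]; exact hαDt
        rw [hdiv, padicValRat.div hNt0 hDtne, hvDt]
        have := vge_of_ne hNt0 hNt
        omega
  obtain ⟨hνne, hαv'⟩ := main
  obtain ⟨α, hαdef⟩ : ∃ a, a = -(L / ν) := ⟨_, rfl⟩
  rw [← hαdef] at hαv'
  have hαv : Vge p (2 * m) α := hαv'
  obtain ⟨β, hβdef⟩ : ∃ b, b = ν⁻¹ := ⟨_, rfl⟩
  have hβne : β ≠ 0 := hβdef ▸ inv_ne_zero hνne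
  have hLν : L = -(ν * α) := by rw [hαdef]; field_simp
  have hβeq : β = s1 - α * t1 := by
    have h1 : ν * (s1 - α * t1) = 1 := by linear_combination -hl1 - t1 * hLν
    rw [hβdef]
    exact (eq_inv_of_mul_eq_one_right h1).symm
  have hβv : Vge p (3 * m) β := by
    rw [hβeq]
    exact vge_sub vs1 (vge_le (vge_mul hαv vt1) (by omega))
  have hy3line : y3 = L * x3 + ν := by rw [hy3, hν]; ring
  have hy3ne : y3 ≠ 0 := by
    intro h0
    have hLne : L ≠ 0 := by
      intro hL0
      apply hνne
      have := hy3line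
      rw [h0, hL0, zero_mul, zero_add] at this
      exact this.symm
    have hαne : α ≠ 0 := by
      rw [hαdef]
      exact neg_ne_zero.mpr (div_ne_zero hLne hνne)
    have h2 : (0 : ℚ) = -(ν * α) * x3 + ν := by rw [← hLν, ← h0]; exact hy3line
    have h3 : ν * (α * x3 - 1) = 0 := by linear_combination h2
    have h4 : α * x3 = 1 := by
      rcases mul_eq_zero.mp h3 with h | h
      · exact absurd h hνne
      · linarith [sub_eq_zero.mp h]
    have hx3eq : x3 = α⁻¹ := eq_inv_of_mul_eq_one_right h4
    have hx3ne : x3 ≠ 0 := hx3eq ▸ inv_ne_zero hαne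
    have hvα : 2 * m ≤ padicValRat p α := vge_of_ne hαne hαv
    have hvx3 : padicValRat p x3 = -padicValRat p α := by rw [hx3eq, padicValRat.inv]
    have hxu : Vge p (padicValRat p x3) x3 := Or.inr le_rfl
    rw [h0] at heq3
    have hcube : x3 ^ 3 = -((a2 : ℚ) * x3 ^ 2 + (a4 : ℚ) * x3 + (a6 : ℚ)) := by
      linear_combination -heq3
    have hv : Vge p (2 * padicValRat p x3) (x3 ^ 3) := by
      rw [hcube]
      refine vge_neg (vge_add (vge_add (vge_int_mul a2 (vge_sq hxu)) ?_) ?_)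
      · exact vge_le (vge_int_mul a4 hxu) (by omega)
      · exact vge_le (vge_intCast a6) (by omega)
    have := vge_of_ne (pow_ne_zero 3 hx3ne) hv
    rw [padicValRat.pow x3] at this
    push_cast at this
    omega
  obtain ⟨t3, ht3⟩ : ∃ t, t = x3 / y3 := ⟨_, rfl⟩
  obtain ⟨s3, hs3⟩ : ∃ s, s = y3⁻¹ := ⟨_, rfl⟩
  have hs3ne : s3 ≠ 0 := hs3 ▸ inv_ne_zero hy3ne
  have hl3 : 1 = L * t3 + ν * s3 := by
    rw [ht3, hs3]
    field_simp
    linear_combination hy3line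
  have hline3 : s3 = α * t3 + β := by
    have h1 : ν * (s3 - α * t3) = 1 := by linear_combination -hl3 - t3 * hLν
    have h2 : s3 - α * t3 = ν⁻¹ := eq_inv_of_mul_eq_one_right h1
    rw [hβdef]
    linarith [h2]
  have F3 : t3 ^ 3 + (a2 : ℚ) * t3 ^ 2 * s3 + (a4 : ℚ) * t3 * s3 ^ 2 + (a6 : ℚ) * s3 ^ 3
      - (a1 : ℚ) * t3 * s3 - (a3 : ℚ) * s3 ^ 2 - s3 = 0 := by
    rw [ht3, hs3]; exact ts_curve a1 a2 a3 a4 a6 hy3ne heq3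
  rw [hline3] at F3
  have hRA : Vge p 1 ((a2 : ℚ) * α + (a4 : ℚ) * α ^ 2 + (a6 : ℚ) * α ^ 3) := by
    have h1 : Vge p 1 ((a2 : ℚ) * α) := vge_le (vge_int_mul a2 hαv) (by omega)
    have h2 : Vge p 1 ((a4 : ℚ) * α ^ 2) := vge_le (vge_int_mul a4 (vge_sq hαv)) (by omega)
    have h3 : Vge p 1 ((a6 : ℚ) * α ^ 3) := vge_le (vge_int_mul a6 (vge_cube hαv)) (by omega)
    exact vge_add (vge_add h1 h2) h3
  obtain ⟨hAne, hvA⟩ := vunit hRA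
  have hC : Vge p (2 * m) ((a2 : ℚ) * β + 2 * (a4 : ℚ) * α * β + 3 * (a6 : ℚ) * α ^ 2 * β
      - (a1 : ℚ) * α - (a3 : ℚ) * α ^ 2) := by
    have h1 : Vge p (2 * m) ((a2 : ℚ) * β) := vge_le (vge_int_mul a2 hβv) (by omega)
    have h2 : Vge p (2 * m) (2 * (a4 : ℚ) * α * β) :=
      vge_le (vge_mul (vge_mul (vge_mul vge_two (vge_intCast a4)) hαv) hβv) (by omega)
    have h3 : Vge p (2 * m) (3 * (a6 : ℚ) * α ^ 2 * β) :=
      vge_le (vge_mul (vge_mul (vge_mul vge_three (vge_intCast a6)) (vge_sq hαv)) hβv)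
        (by omega)
    have h4 : Vge p (2 * m) ((a1 : ℚ) * α) := vge_le (vge_int_mul a1 hαv) (by omega)
    have h5 : Vge p (2 * m) ((a3 : ℚ) * α ^ 2) :=
      vge_le (vge_int_mul a3 (vge_sq hαv)) (by omega)
    exact vge_sub (vge_sub (vge_add (vge_add h1 h2) h3) h4) h5
  have hD1 : Vge p (2 * m) ((a4 : ℚ) * β ^ 2 + 3 * (a6 : ℚ) * α * β ^ 2 - (a1 : ℚ) * β
      - 2 * (a3 : ℚ) * α * β - α) := by
    have h1 : Vge p (2 * m) ((a4 : ℚ) * β ^ 2) := vge_le (vge_int_mul a4 (vge_sq hβv)) (by omega)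
    have h2 : Vge p (2 * m) (3 * (a6 : ℚ) * α * β ^ 2) :=
      vge_le (vge_mul (vge_mul (vge_mul vge_three (vge_intCast a6)) hαv) (vge_sq hβv))
        (by omega)
    have h3 : Vge p (2 * m) ((a1 : ℚ) * β) := vge_le (vge_int_mul a1 hβv) (by omega)
    have h4 : Vge p (2 * m) (2 * (a3 : ℚ) * α * β) :=
      vge_le (vge_mul (vge_mul (vge_mul vge_two (vge_intCast a3)) hαv) hβv) (by omega)
    exact vge_sub (vge_sub (vge_sub (vge_add h1 h2) h3) h4) hαv
  have hE0 : Vge p (3 * m) ((a6 : ℚ) * β ^ 3 - (a3 : ℚ) * β ^ 2 - β) := by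
    have h1 : Vge p (3 * m) ((a6 : ℚ) * β ^ 3) := vge_le (vge_int_mul a6 (vge_cube hβv)) (by omega)
    have h2 : Vge p (3 * m) ((a3 : ℚ) * β ^ 2) := vge_le (vge_int_mul a3 (vge_sq hβv)) (by omega)
    exact vge_sub (vge_sub h1 h2) hβv
  have hphi : (1 + ((a2 : ℚ) * α + (a4 : ℚ) * α ^ 2 + (a6 : ℚ) * α ^ 3)) * t3 ^ 3
      + ((a2 : ℚ) * β + 2 * (a4 : ℚ) * α * β + 3 * (a6 : ℚ) * α ^ 2 * β
      - (a1 : ℚ) * α - (a3 : ℚ) * α ^ 2) * t3 ^ 2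
      + ((a4 : ℚ) * β ^ 2 + 3 * (a6 : ℚ) * α * β ^ 2 - (a1 : ℚ) * β
      - 2 * (a3 : ℚ) * α * β - α) * t3
      + ((a6 : ℚ) * β ^ 3 - (a3 : ℚ) * β ^ 2 - β) = 0 := by
    linear_combination F3
  have ht3ne : t3 ≠ 0 := by
    intro h0
    have hx30 : x3 = 0 := by
      have := ht3
      rw [h0] at this
      rcases div_eq_zero_iff.mp this.symm with h | h
      · exact h
      · exact absurd h hy3ne
    have hs3β : s3 = β := by rw [hline3, h0, mul_zero, zero_add]
    have hvs3 : 3 * m ≤ padicValRat p s3 := by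
      rw [hs3β]; exact vge_of_ne hβne hβv
    have hvy3 : padicValRat p y3 ≤ -(3 * m) := by
      have hh : padicValRat p s3 = -padicValRat p y3 := by rw [hs3, padicValRat.inv]
      omega
    rw [hx30] at heq3
    have hsq : y3 ^ 2 = (a6 : ℚ) - (a3 : ℚ) * y3 := by linear_combination heq3
    have hv : Vge p (padicValRat p y3) (y3 ^ 2) := by
      rw [hsq]
      refine vge_sub (vge_le (vge_intCast a6) (by omega)) ?_
      exact vge_int_mul a3 (Or.inr le_rfl)
    have := vge_of_ne (pow_ne_zero 2 hy3ne) hv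
    rw [padicValRat.pow y3] at this
    push_cast at this
    omega
  have vt3self : Vge p (padicValRat p t3) t3 := Or.inr le_rfl
  have hwt3 : m ≤ padicValRat p t3 := by
    by_contra hcon
    push_neg at hcon
    have hA3v : padicValRat p ((1 + ((a2 : ℚ) * α + (a4 : ℚ) * α ^ 2 + (a6 : ℚ) * α ^ 3))
        * t3 ^ 3) = 3 * padicValRat p t3 := by
      rw [padicValRat.mul hAne (pow_ne_zero _ ht3ne), hvA, padicValRat.pow t3]
      push_cast; ring
    have hrest : Vge p (3 * padicValRat p t3 + 1)
        (((a2 : ℚ) * β + 2 * (a4 : ℚ) * α * β + 3 * (a6 : ℚ) * α ^ 2 * β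
        - (a1 : ℚ) * α - (a3 : ℚ) * α ^ 2) * t3 ^ 2
        + ((a4 : ℚ) * β ^ 2 + 3 * (a6 : ℚ) * α * β ^ 2 - (a1 : ℚ) * β
        - 2 * (a3 : ℚ) * α * β - α) * t3
        + ((a6 : ℚ) * β ^ 3 - (a3 : ℚ) * β ^ 2 - β)) := by
      refine vge_add (vge_add ?_ ?_) ?_
      · exact vge_le (vge_mul hC (vge_sq vt3self)) (by omega)
      · exact vge_le (vge_mul hD1 vt3self) (by omega)
      · exact vge_le hE0 (by omega)
    have hsum : (1 + ((a2 : ℚ) * α + (a4 : ℚ) * α ^ 2 + (a6 : ℚ) * α ^ 3)) * t3 ^ 3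
        = -(((a2 : ℚ) * β + 2 * (a4 : ℚ) * α * β + 3 * (a6 : ℚ) * α ^ 2 * β
        - (a1 : ℚ) * α - (a3 : ℚ) * α ^ 2) * t3 ^ 2
        + ((a4 : ℚ) * β ^ 2 + 3 * (a6 : ℚ) * α * β ^ 2 - (a1 : ℚ) * β
        - 2 * (a3 : ℚ) * α * β - α) * t3
        + ((a6 : ℚ) * β ^ 3 - (a3 : ℚ) * β ^ 2 - β)) := by
      linear_combination hphi
    have hvge := vge_of_ne (mul_ne_zero hAne (pow_ne_zero 3 ht3ne)) (hsum ▸ vge_neg hrest)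
    rw [hA3v] at hvge
    omega
  have hs3v : 3 * m ≤ padicValRat p s3 := by
    apply vge_of_ne hs3ne
    rw [hline3]
    exact vge_add (vge_le (vge_mul hαv (Or.inr hwt3)) (by omega)) hβv
  have hvy3 : padicValRat p y3 ≤ -(3 * m) := by
    have hh : padicValRat p s3 = -padicValRat p y3 := by rw [hs3, padicValRat.inv]
    omega
  obtain ⟨hx3ne, hvx3neg⟩ := LB (p := p) a1 a2 a3 a4 a6 heq3 hy3ne (by omega)
  obtain ⟨k3, hk3, -, hvx3, hvy3'⟩ := LA (p := p) a1 a2 a3 a4 a6 heq3 hx3ne hvx3neg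
  exact ⟨hx3ne, by omega⟩

end core


section assembly
open WeierstrassCurve

variable (W : WeierstrassCurve ℤ)

/-- The affine coordinates of a nonsingular point satisfy the explicit Weierstrass equation. -/
lemma eqn_of_ns {x y : ℚ} (h : (W.baseChange ℚ).toAffine.Nonsingular x y) :
    y ^ 2 + (W.a₁ : ℚ) * x * y + (W.a₃ : ℚ) * y
      = x ^ 3 + (W.a₂ : ℚ) * x ^ 2 + (W.a₄ : ℚ) * x + (W.a₆ : ℚ) := by
  have heq : (W.baseChange ℚ).toAffine.Equation x y := h.1
  rw [Affine.equation_iff] at heq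
  simpa [WeierstrassCurve.baseChange, algebraMap_int_eq, eq_intCast] using heq

variable {p : ℕ} [hp : Fact p.Prime]

/-- Membership in the `m`-th term of the filtration by kernels of reduction. -/
def good (P : ℕ) (m : ℤ) (Q : (W.baseChange ℚ).toAffine.Point) : Prop :=
  Q = 0 ∨ ∃ x y : ℚ, ∃ h : (W.baseChange ℚ).toAffine.Nonsingular x y,
    Q = Affine.Point.some _ _ h ∧ x ≠ 0 ∧ padicValRat P x ≤ -(2 * m)

lemma good_exact {m : ℤ} (hm : 1 ≤ m) {x y : ℚ}
    (h : (W.baseChange ℚ).toAffine.Nonsingular x y)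
    (hx : x ≠ 0) (hv : padicValRat p x ≤ -(2 * m)) :
    ∃ k : ℤ, m ≤ k ∧ y ≠ 0 ∧ padicValRat p x = -(2 * k) ∧ padicValRat p y = -(3 * k) := by
  obtain ⟨k, hk1, hy, hvx, hvy⟩ := LA (p := p) W.a₁ W.a₂ W.a₃ W.a₄ W.a₆ (eqn_of_ns W h)
    hx (by omega)
  exact ⟨k, by omega, hy, hvx, hvy⟩

lemma good_add {m : ℤ} (hm : 1 ≤ m) {Q R : (W.baseChange ℚ).toAffine.Point}
    (hQ : good W p m Q) (hR : good W p m R) : good W p m (Q + R) := by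
  rcases hQ with rfl | ⟨x1, y1, h1, rfl, hx1ne, hv1⟩
  · rwa [zero_add]
  rcases hR with rfl | ⟨x2, y2, h2, rfl, hx2ne, hv2⟩
  · rw [add_zero]; exact Or.inr ⟨x1, y1, h1, rfl, hx1ne, hv1⟩
  by_cases hcrit : x1 = x2 ∧ y1 = (W.baseChange ℚ).toAffine.negY x2 y2
  · left
    exact Affine.Point.add_of_Y_eq hcrit.1 hcrit.2
  · have hxy : x1 = x2 → y1 ≠ (W.baseChange ℚ).toAffine.negY x2 y2 :=
      fun hx hy => hcrit ⟨hx, hy⟩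
    right
    obtain ⟨k1, hk1, hy1ne, hvx1, hvy1⟩ := good_exact W hm h1 hx1ne hv1
    obtain ⟨k2, hk2, hy2ne, hvx2, hvy2⟩ := good_exact W hm h2 hx2ne hv2
    set L := (W.baseChange ℚ).toAffine.slope x1 x2 y1 y2 with hLs
    have hns3 := Affine.nonsingular_add h1 h2 (fun h => hxy h.1 h.2)
    have heq3raw := Affine.equation_negAdd h1.1 h2.1 (fun h => hxy h.1 h.2)
    have hLdisj : (x1 ≠ x2 ∧ L = (y1 - y2) / (x1 - x2)) ∨
        (x1 = x2 ∧ y1 = y2 ∧ (2 * y1 + (W.a₁ : ℚ) * x1 + (W.a₃ : ℚ)) ≠ 0 ∧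
          L = (3 * x1 ^ 2 + 2 * (W.a₂ : ℚ) * x1 + (W.a₄ : ℚ) - (W.a₁ : ℚ) * y1)
            / (2 * y1 + (W.a₁ : ℚ) * x1 + (W.a₃ : ℚ))) := by
      by_cases hx12 : x1 = x2
      · right
        have hy12 : y1 = y2 := Affine.Y_eq_of_Y_ne h1.1 h2.1 hx12 (hxy hx12)
        have hden : y1 - (W.baseChange ℚ).toAffine.negY x1 y1
            = 2 * y1 + (W.a₁ : ℚ) * x1 + (W.a₃ : ℚ) := by
          rw [Affine.negY]
          simp [WeierstrassCurve.baseChange, algebraMap_int_eq, eq_intCast]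
          ring
        have hdenne : (2 * y1 + (W.a₁ : ℚ) * x1 + (W.a₃ : ℚ)) ≠ 0 := by
          have h' : y1 ≠ (W.baseChange ℚ).toAffine.negY x2 y2 := hxy hx12
          rw [← hx12, ← hy12] at h'
          rw [← hden]
          exact sub_ne_zero.mpr h'
        refine ⟨hx12, hy12, hdenne, ?_⟩
        rw [hLs, Affine.slope_of_Y_ne hx12 (hxy hx12), hden]
        simp [WeierstrassCurve.baseChange, algebraMap_int_eq, eq_intCast]
      · left
        exact ⟨hx12, by rw [hLs, Affine.slope_of_X_ne hx12]⟩
    have hx3def : (W.baseChange ℚ).toAffine.addX x1 x2 L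
        = L ^ 2 + (W.a₁ : ℚ) * L - (W.a₂ : ℚ) - x1 - x2 := by
      rw [Affine.addX]
      simp [WeierstrassCurve.baseChange, algebraMap_int_eq, eq_intCast]
    have hy3def : (W.baseChange ℚ).toAffine.negAddY x1 x2 y1 L
        = L * ((W.baseChange ℚ).toAffine.addX x1 x2 L - x1) + y1 := by
      rw [Affine.negAddY]
    have heq3 : ((W.baseChange ℚ).toAffine.negAddY x1 x2 y1 L) ^ 2
        + (W.a₁ : ℚ) * ((W.baseChange ℚ).toAffine.addX x1 x2 L)
          * ((W.baseChange ℚ).toAffine.negAddY x1 x2 y1 L)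
        + (W.a₃ : ℚ) * ((W.baseChange ℚ).toAffine.negAddY x1 x2 y1 L)
        = ((W.baseChange ℚ).toAffine.addX x1 x2 L) ^ 3
        + (W.a₂ : ℚ) * ((W.baseChange ℚ).toAffine.addX x1 x2 L) ^ 2
        + (W.a₄ : ℚ) * ((W.baseChange ℚ).toAffine.addX x1 x2 L)
        + (W.a₆ : ℚ) := by
      have hh := heq3raw
      rw [← hLs] at hh
      rw [Affine.equation_iff] at hh
      simpa [WeierstrassCurve.baseChange, algebraMap_int_eq, eq_intCast] using hh
    obtain ⟨hx3ne, hvx3⟩ := core (p := p) W.a₁ W.a₂ W.a₃ W.a₄ W.a₆ hm hk1 hk2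
      hx1ne hy1ne hx2ne hy2ne hvx1 hvy1 hvx2 hvy2
      (eqn_of_ns W h1) (eqn_of_ns W h2) heq3 hx3def hy3def hLdisj
    refine ⟨_, _, hns3, ?_, hx3ne, hvx3⟩
    exact (Affine.Point.add_some (fun h => hxy h.1 h.2))

lemma good_nsmul {m : ℤ} (hm : 1 ≤ m) {P : (W.baseChange ℚ).toAffine.Point}
    (hP : good W p m P) : ∀ n : ℕ, good W p m (n • P) := by
  intro n
  induction n with
  | zero => rw [zero_nsmul]; exact Or.inl rfl
  | succ n ih => rw [succ_nsmul]; exact good_add W hm ih hP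

end assembly

section denominator

lemma dvd_iff_padicValNat_ne_zero' {p n : ℕ} [Fact p.Prime] (hn0 : n ≠ 0) :
    p ∣ n ↔ padicValNat p n ≠ 0 := dvd_iff_padicValNat_ne_zero hn0

/-- `p`-adic valuation of a rational with `p` dividing the denominator. -/
lemma vden {p : ℕ} [hp : Fact p.Prime] {q : ℚ} (h : p ∣ q.den) :
    q ≠ 0 ∧ padicValRat p q = -(padicValNat p q.den : ℤ) ∧ 0 < padicValNat p q.den := by
  have hq : q ≠ 0 := by
    intro h0
    rw [h0, Rat.den_zero] at h
    exact hp.out.one_lt.ne' (Nat.dvd_one.mp h)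
  have hnum : ¬ p ∣ q.num.natAbs := by
    intro hd
    have h1 : p ∣ Nat.gcd q.num.natAbs q.den := Nat.dvd_gcd hd h
    exact hp.out.one_lt.ne' (Nat.dvd_one.mp (q.reduced ▸ h1))
  have hv : padicValInt p q.num = 0 := by
    unfold padicValInt
    exact padicValNat.eq_zero_of_not_dvd hnum
  refine ⟨hq, ?_, one_le_padicValNat_of_dvd q.den_nz h⟩
  rw [padicValRat_def, hv]
  omega

lemma vnotden {p : ℕ} [hp : Fact p.Prime] {q : ℚ} (h : ¬ p ∣ q.den) :
    0 ≤ padicValRat p q := by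
  have hv : padicValNat p q.den = 0 := padicValNat.eq_zero_of_not_dvd h
  rw [padicValRat_def, hv]
  omega

/-- The denominator of the `x`-coordinate of a rational point is a perfect square. -/
lemma den_sqrt (a1 a2 a3 a4 a6 : ℤ) {x y : ℚ}
    (heq : y ^ 2 + (a1 : ℚ) * x * y + (a3 : ℚ) * y
      = x ^ 3 + (a2 : ℚ) * x ^ 2 + (a4 : ℚ) * x + (a6 : ℚ)) :
    ∃ b : ℕ, b ≠ 0 ∧ x.den = b ^ 2 ∧ Nat.sqrt x.den = b ∧
      ∀ p : ℕ, p.Prime → 2 * padicValNat p b = padicValNat p x.den := by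
  have hden0 : x.den ≠ 0 := x.den_nz
  have heven : ∀ p : ℕ, p.Prime → Even (x.den.factorization p) := by
    intro p hp
    haveI : Fact p.Prime := ⟨hp⟩
    by_cases hdvd : p ∣ x.den
    · obtain ⟨hq, hv, hpos⟩ := vden (p := p) (q := x) hdvd
      have hneg : padicValRat p x < 0 := by omega
      obtain ⟨k, hk1, hy, hvx, hvy⟩ := LA (p := p) a1 a2 a3 a4 a6 heq hq hneg
      rw [Nat.factorization_def _ hp]
      refine ⟨k.toNat, ?_⟩
      omega
    · rw [Nat.factorization_def _ hp, padicValNat.eq_zero_of_not_dvd hdvd]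
      exact Even.zero
  obtain ⟨b, hb⟩ : ∃ b : ℕ, b ^ 2 = x.den := by
    refine ⟨x.den.factorization.prod fun q e => q ^ (e / 2), ?_⟩
    rw [Finsupp.prod, ← Finset.prod_pow]
    rw [show (∏ q ∈ x.den.factorization.support, (q ^ (x.den.factorization q / 2)) ^ 2)
        = ∏ q ∈ x.den.factorization.support, q ^ x.den.factorization q from
      Finset.prod_congr rfl fun q hq => by
        rw [← pow_mul, Nat.div_mul_cancel
          ((heven q (Nat.prime_of_mem_primeFactors
            (by rwa [Nat.support_factorization] at hq))).two_dvd)]]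
    conv_rhs => rw [← Nat.factorization_prod_pow_eq_self hden0]
    rfl
  have hbne : b ≠ 0 := by
    intro h0
    rw [h0] at hb
    simp at hb
    exact hden0 hb.symm
  refine ⟨b, hbne, hb.symm, by rw [← hb, Nat.sqrt_eq'], ?_⟩
  intro p hp
  haveI : Fact p.Prime := ⟨hp⟩
  rw [← hb, show b ^ 2 = b * b from sq b, padicValNat.mul hbne hbne]
  ring

end denominator

end St13Aux





/-- Let `E` be an elliptic curve over `ℚ` given by a Weierstrass equation with
integer coefficients and `P ∈ E(ℚ)`.  Then `B_1(E,P)` divides `B_n(E,P)` for every `n ∈ ℕ`;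
in particular the sequence `β_n(E,P) = ±B_n(E,P)/B_1(E,P)` is a sequence of integers. -/
theorem statement13 (W : WeierstrassCurve ℤ) (hΔ : (EDS.WQ W).Δ ≠ 0)
    (P : (EDS.WQ W).toAffine.Point) :
    ∀ n : ℕ, EDS.B W P 1 ∣ EDS.B W P n ∧ ∃ z : ℤ, EDS.β W P n = (z : ℚ) := by
  intro n
  have hdvd : EDS.B W P 1 ∣ EDS.B W P n := by
    by_cases hn : n • P = 0
    · have hBn : EDS.B W P n = 0 := by simp [EDS.B, hn]
      rw [hBn]; exact dvd_zero _
    · have hP : P ≠ 0 := by rintro rfl; exact hn (nsmul_zero n)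
      rcases P with _ | @⟨x1, y1, h1⟩
      · exact absurd rfl hP
      obtain ⟨Q, hQ⟩ : ∃ Q, Q = n • WeierstrassCurve.Affine.Point.some _ _ h1 := ⟨_, rfl⟩
      rcases Q with _ | @⟨xn, yn, hn2⟩
      · exact absurd hQ.symm hn
      have hB1 : EDS.B W (WeierstrassCurve.Affine.Point.some _ _ h1) 1 = Nat.sqrt x1.den := by
        rw [EDS.B, if_neg (by rwa [one_nsmul])]
        rw [one_nsmul]
        rfl
      have hBn : EDS.B W (WeierstrassCurve.Affine.Point.some _ _ h1) n = Nat.sqrt xn.den := by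
        rw [EDS.B, if_neg hn, ← hQ]
        rfl
      obtain ⟨b1, hb1ne, hb1sq, hb1sqrt, hb1val⟩ :=
        St13Aux.den_sqrt W.a₁ W.a₂ W.a₃ W.a₄ W.a₆ (St13Aux.eqn_of_ns W h1)
      obtain ⟨bn, hbnne, hbnsq, hbnsqrt, hbnval⟩ :=
        St13Aux.den_sqrt W.a₁ W.a₂ W.a₃ W.a₄ W.a₆ (St13Aux.eqn_of_ns W hn2)
      rw [hB1, hBn, hb1sqrt, hbnsqrt]
      rw [← Nat.factorization_le_iff_dvd hb1ne hbnne]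
      rw [Finsupp.le_iff]
      intro q hqsupp
      have hq : q.Prime := Nat.prime_of_mem_primeFactors
        (by rwa [Nat.support_factorization] at hqsupp)
      haveI : Fact q.Prime := ⟨hq⟩
      rw [Nat.factorization_def _ hq, Nat.factorization_def _ hq]
      by_cases hz : padicValNat q b1 = 0
      · omega
      · have hdenval1 := hb1val q hq
        have hdvd1 : q ∣ x1.den := by
          rw [St13Aux.dvd_iff_padicValNat_ne_zero' x1.den_nz]
          omega
        obtain ⟨hx1ne0, hvx1, hposden⟩ := St13Aux.vden hdvd1
        have hvneg : padicValRat q x1 < 0 := by omega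
        obtain ⟨k, hk1, hy1ne, hvx1k, hvy1k⟩ := St13Aux.LA (p := q) W.a₁ W.a₂ W.a₃ W.a₄ W.a₆
          (St13Aux.eqn_of_ns W h1) hx1ne0 hvneg
        have hgood : St13Aux.good W q k (WeierstrassCurve.Affine.Point.some _ _ h1) :=
          Or.inr ⟨x1, y1, h1, rfl, hx1ne0, by omega⟩
        have hgoodn := St13Aux.good_nsmul W (by omega : (1:ℤ) ≤ k) hgood n
        rw [← hQ] at hgoodn
        rcases hgoodn with h0 | ⟨xn', yn', hn', heqpt, hxnne, hvxn⟩
        · exact absurd h0 (WeierstrassCurve.Affine.Point.some_ne_zero hn2)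
        · have hxeq : xn = xn' := congrArg (EDS.ptX W) heqpt
          rw [← hxeq] at hvxn
          have hdvdn : q ∣ xn.den := by
            by_contra hc
            have := St13Aux.vnotden (p := q) (q := xn) hc
            omega
          obtain ⟨-, hvxnval, -⟩ := St13Aux.vden hdvdn
          have hdenvaln := hbnval q hq
          omega
  refine ⟨hdvd, ?_⟩
  by_cases hBn0 : EDS.B W P n = 0
  · exact ⟨0, by simp [EDS.β, hBn0]⟩
  · have hB10 : EDS.B W P 1 ≠ 0 := by
      intro h0
      rw [EDS.B] at h0
      by_cases h1P : (1:ℕ) • P = 0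
      · rw [one_nsmul] at h1P
        apply hBn0
        rw [EDS.B, if_pos (by rw [h1P]; exact nsmul_zero n)]
      · rw [if_neg h1P, Nat.sqrt_eq_zero] at h0
        exact (EDS.ptX W ((1:ℕ) • P)).den_nz h0
    obtain ⟨c, hc⟩ := hdvd
    refine ⟨(SignType.sign (EDS.ψval W P n) : ℤ) * c, ?_⟩
    rw [EDS.β, hc]
    have hcast : (EDS.B W P 1 : ℚ) ≠ 0 := Nat.cast_ne_zero.mpr hB10
    push_cast
    field_simp
end
end
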